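/- For every t≥0 and every positive integer j satisfying 2DΓ(β+1)·j·(α(j−1)+β+1)^{α−β} ≤ CΓ(α+1)·t^{α−β}, one has V_j(t) ≤ (331/100)·ρ_j·t^{αj}. -/

import Mathlib

open MeasureTheory

/-- Convolution of two Borel measures on ℝ. -/
noncomputable def mconv (μ ν : Measure ℝ) : Measure ℝ :=
  (μ.prod ν).map (fun p => p.1 + p.2)

/-- Convolution powers: μ^{*0} = δ₀ and μ^{*(n+1)} = μ^{*n} ∗ μ. -/
noncomputable def convpow (μ : Measure ℝ) : ℕ → Measure ℝ
  | 0 => Measure.dirac 0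
  | n + 1 => mconv (convpow μ n) μ

open Set ENNReal


lemma realBeta {p q a : ℝ} (hp : 0 < p) (hq : 0 < q) (ha : 0 < a) :
    ∫ x in (0:ℝ)..a, x ^ (p-1) * (a-x) ^ (q-1) =
      a ^ (p+q-1) * (Real.Gamma p * Real.Gamma q / Real.Gamma (p+q)) := by
  have hpq : (0:ℝ) < p + q := by linarith
  have hΓ : Real.Gamma (p+q) ≠ 0 := (Real.Gamma_pos_of_pos hpq).ne'
  have hcast : ((p:ℂ) + q) = ((p+q : ℝ) : ℂ) := by push_cast; ring
  have hΓc : Complex.Gamma ((p:ℂ) + q) ≠ 0 := by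
    rw [hcast, Complex.Gamma_ofReal]
    exact_mod_cast hΓ
  have hbeta : Complex.betaIntegral p q = ((Real.Gamma p * Real.Gamma q / Real.Gamma (p+q) : ℝ) : ℂ) := by
    have h := Complex.Gamma_mul_Gamma_eq_betaIntegral (s := (p:ℂ)) (t := (q:ℂ))
      (by simpa using hp) (by simpa using hq)
    have : Complex.betaIntegral p q = Complex.Gamma p * Complex.Gamma q / Complex.Gamma ((p:ℂ)+q) :=
      (eq_div_iff hΓc).mpr (by linear_combination -h)
    rw [this, hcast, Complex.Gamma_ofReal, Complex.Gamma_ofReal, Complex.Gamma_ofReal]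
    push_cast
    ring
  have hscaled := Complex.betaIntegral_scaled (p:ℂ) (q:ℂ) ha
  have hLHS : (∫ x in (0:ℝ)..a, (x:ℂ) ^ ((p:ℂ) - 1) * ((a:ℂ) - (x:ℂ)) ^ ((q:ℂ) - 1))
      = ((∫ x in (0:ℝ)..a, x ^ (p-1) * (a-x) ^ (q-1) : ℝ) : ℂ) := by
    rw [← intervalIntegral.integral_ofReal]
    refine intervalIntegral.integral_congr (fun x hx => ?_)
    rw [uIcc_of_le ha.le] at hx
    have hx0 : 0 ≤ x := hx.1
    have hxa : 0 ≤ a - x := by linarith [hx.2]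
    rw [show ((p:ℂ) - 1) = ((p-1:ℝ):ℂ) by push_cast; ring,
        show ((q:ℂ) - 1) = ((q-1:ℝ):ℂ) by push_cast; ring,
        show ((a:ℂ) - (x:ℂ)) = ((a-x:ℝ):ℂ) by push_cast; ring,
        ← Complex.ofReal_cpow hx0, ← Complex.ofReal_cpow hxa, ← Complex.ofReal_mul]
  rw [hLHS, hbeta] at hscaled
  have hRHS : ((a:ℂ) ^ ((p:ℂ) + q - 1)) = ((a ^ (p+q-1) : ℝ) : ℂ) := by
    rw [show ((p:ℂ) + q - 1) = ((p+q-1:ℝ):ℂ) by push_cast; ring, ← Complex.ofReal_cpow ha.le]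
  rw [hRHS, ← Complex.ofReal_mul] at hscaled
  exact_mod_cast hscaled

lemma betaLint {γ δ t0 K : ℝ} (hγ : 0 < γ) (hδ : 0 ≤ δ) (hK : 0 ≤ K) (ht00 : 0 ≤ t0) :
    ∫⁻ u in Ioo (0:ℝ) t0, ENNReal.ofReal (γ * u^(γ-1)) * ENNReal.ofReal (K * (t0-u)^δ)
      ≤ ENNReal.ofReal (K * (Real.Gamma (γ+1) * Real.Gamma (δ+1) / Real.Gamma (γ+δ+1))
          * t0 ^ (γ+δ)) := by
  rcases eq_or_lt_of_le ht00 with rfl | ht0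
  · simp
  · have hI0 : IntegrableOn (fun u : ℝ => u ^ (γ-1)) (Ioo 0 t0) volume := by
      have := (intervalIntegral.intervalIntegrable_rpow' (a := 0) (b := t0)
        (r := γ-1) (by linarith)).1
      exact this.mono_set Ioo_subset_Ioc_self
    have hInt : IntegrableOn (fun u : ℝ => (K*(t0-u)^δ) * (γ * u^(γ-1))) (Ioo 0 t0) volume := by
      refine Integrable.bdd_mul (c := |K| * t0 ^ δ) (hI0.const_mul γ) ?_ ?_
      · exact (Measurable.aestronglyMeasurable (by fun_prop))
      · refine (ae_restrict_iff' measurableSet_Ioo).2 (ae_of_all _ fun u hu => ?_)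
        rw [Real.norm_eq_abs, abs_mul, abs_of_nonneg (Real.rpow_nonneg (by linarith [hu.2]) δ)]
        exact mul_le_mul_of_nonneg_left
          (Real.rpow_le_rpow (by linarith [hu.2]) (by linarith [hu.1]) hδ) (abs_nonneg K)
    have key : ∫⁻ u in Ioo (0:ℝ) t0, ENNReal.ofReal (γ * u^(γ-1)) * ENNReal.ofReal (K * (t0-u)^δ)
        = ENNReal.ofReal (∫ u in Ioo (0:ℝ) t0, (K*(t0-u)^δ) * (γ * u^(γ-1))) := by
      rw [ofReal_integral_eq_lintegral_ofReal hInt]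
      · refine setLIntegral_congr_fun measurableSet_Ioo (fun u hu => ?_)
        rw [← ENNReal.ofReal_mul (mul_nonneg hγ.le (Real.rpow_nonneg hu.1.le _))]
        ring_nf
      · refine (ae_restrict_iff' measurableSet_Ioo).2 (ae_of_all _ fun u hu => ?_)
        have h1 : (0:ℝ) ≤ t0 - u := by linarith [hu.2]
        have h2 : (0:ℝ) ≤ u := hu.1.le
        positivity
    rw [key]
    apply le_of_eq
    congr 1
    have : ∫ u in Ioo (0:ℝ) t0, (K*(t0-u)^δ) * (γ * u^(γ-1))
        = (K * γ) * ∫ u in (0:ℝ)..t0, u^(γ-1) * (t0-u)^((δ+1)-1) := by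
      rw [intervalIntegral.integral_of_le ht0.le, integral_Ioc_eq_integral_Ioo,
        ← integral_const_mul]
      refine setIntegral_congr_fun measurableSet_Ioo fun u hu => ?_
      show (K*(t0-u)^δ) * (γ * u^(γ-1)) = K * γ * (u ^ (γ-1) * (t0-u)^(δ+1-1))
      ring_nf
    rw [this, realBeta hγ (by linarith : (0:ℝ) < δ+1) ht0]
    rw [Real.Gamma_add_one hγ.ne']
    ring_nf

lemma layerRep {γ v : ℝ} (hγ : 0 < γ) (hv : 0 ≤ v) :
    ENNReal.ofReal (v ^ γ) = ∫⁻ u in Ioo (0:ℝ) v, ENNReal.ofReal (γ * u ^ (γ-1)) := by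
  rcases eq_or_lt_of_le hv with rfl | hv
  · simp [Real.zero_rpow hγ.ne']
  · have hInt : IntegrableOn (fun u : ℝ => γ * u ^ (γ-1)) (Ioo 0 v) volume := by
      have := (intervalIntegral.intervalIntegrable_rpow' (a := 0) (b := v)
        (r := γ-1) (by linarith)).1
      exact (this.mono_set Ioo_subset_Ioc_self).const_mul γ
    rw [← ofReal_integral_eq_lintegral_ofReal hInt
      ((ae_restrict_iff' measurableSet_Ioo).2 (ae_of_all _ fun u hu =>
        mul_nonneg hγ.le (Real.rpow_nonneg hu.1.le _)))]
    congr 1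
    rw [← integral_Ioc_eq_integral_Ioo, ← intervalIntegral.integral_of_le hv.le,
      intervalIntegral.integral_const_mul, integral_rpow (Or.inl (by linarith))]
    rw [sub_add_cancel, Real.zero_rpow hγ.ne']
    field_simp
    simp

lemma powInt (ρ : Measure ℝ) {t0 γ : ℝ} (ht0 : 0 ≤ t0) (hγ : 0 < γ)
    (hfin : ρ (Icc 0 t0) ≠ ⊤) :
    ∫⁻ x in Icc 0 t0, ENNReal.ofReal ((t0 - x) ^ γ) ∂ρ
      ≤ ∫⁻ u in Ioo (0:ℝ) t0, ENNReal.ofReal (γ * u ^ (γ-1)) * ρ (Icc 0 (t0 - u)) := by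
  set ρ' := ρ.restrict (Icc 0 t0) with hρ'
  haveI : IsFiniteMeasure ρ' := ⟨by rwa [Measure.restrict_apply_univ, lt_top_iff_ne_top]⟩
  set c : ℝ → ℝ≥0∞ := fun u => ENNReal.ofReal (γ * u ^ (γ-1)) with hc
  set F : ℝ → ℝ → ℝ≥0∞ := fun x u => (Ioo 0 (t0-x)).indicator c u with hF
  have step1 : ∫⁻ x in Icc 0 t0, ENNReal.ofReal ((t0 - x) ^ γ) ∂ρ
      = ∫⁻ x, ∫⁻ u, F x u ∂volume ∂ρ' := by
    refine setLIntegral_congr_fun measurableSet_Icc (fun x hx => ?_)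
    rw [layerRep hγ (by linarith [hx.2] : (0:ℝ) ≤ t0 - x), ← lintegral_indicator measurableSet_Ioo]
  have hmeas : AEMeasurable (Function.uncurry F) (ρ'.prod volume) := by
    have : Function.uncurry F = Set.indicator {p : ℝ × ℝ | 0 < p.2 ∧ p.1 + p.2 < t0}
        (fun p => ENNReal.ofReal (γ * p.2 ^ (γ-1))) := by
      funext p
      by_cases h : p.2 ∈ Ioo 0 (t0 - p.1)
      · rw [Function.uncurry_apply_pair, hF]
        simp only [indicator_of_mem h]
        rw [indicator_of_mem (by simpa [lt_sub_iff_add_lt'] using h)]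
      · rw [Function.uncurry_apply_pair, hF]
        simp only [indicator_of_notMem h]
        rw [indicator_of_notMem (by simpa [lt_sub_iff_add_lt'] using h)]
    rw [this]
    refine (Measurable.indicator ?_ ?_).aemeasurable
    · fun_prop
    · exact (measurableSet_lt measurable_const measurable_snd).inter
        (measurableSet_lt (measurable_fst.add measurable_snd) measurable_const)
  have step2 : ∫⁻ x, ∫⁻ u, F x u ∂volume ∂ρ' = ∫⁻ u, ∫⁻ x, F x u ∂ρ' ∂volume :=
    lintegral_lintegral_swap hmeas
  have inner : ∀ u : ℝ, ∫⁻ x, F x u ∂ρ' = c u * ρ' {x | 0 < u ∧ x < t0 - u} := by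
    intro u
    by_cases hu : 0 < u
    · have : ∀ x, F x u = (Iio (t0 - u)).indicator (fun _ => c u) x := by
        intro x
        by_cases h : x < t0 - u
        · rw [hF]
          simp only [indicator_of_mem (show x ∈ Iio (t0-u) from h)]
          exact indicator_of_mem (by constructor <;> [exact hu; linarith]) c
        · rw [hF]
          simp only [indicator_of_notMem (show x ∉ Iio (t0-u) from h)]
          refine indicator_of_notMem (fun hmem => h ?_) c
          linarith [hmem.2]
      simp_rw [this]
      rw [lintegral_indicator measurableSet_Iio, setLIntegral_const]
      have hss : {x : ℝ | 0 < u ∧ x < t0 - u} = Iio (t0 - u) := by ext x; simp [hu]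
      rw [hss]
    · have h1 : ∀ x, F x u = 0 := by
        intro x
        refine indicator_of_notMem (fun hmem => hu hmem.1) c
      have h2 : {x : ℝ | 0 < u ∧ x < t0 - u} = ∅ := by
        ext x; simp [hu]
      simp_rw [h1, h2]
      simp
  have step3 : ∫⁻ u, ∫⁻ x, F x u ∂ρ' ∂volume
      ≤ ∫⁻ u in Ioo (0:ℝ) t0, ENNReal.ofReal (γ * u ^ (γ-1)) * ρ (Icc 0 (t0 - u)) := by
    rw [← lintegral_indicator measurableSet_Ioo]
    refine lintegral_mono fun u => ?_
    rw [inner u]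
    by_cases hu : u ∈ Ioo 0 t0
    · rw [indicator_of_mem hu]
      refine mul_le_mul_right ?_ _
      have hset : {x : ℝ | 0 < u ∧ x < t0 - u} = Iio (t0 - u) := by
        ext x; simp [hu.1]
      rw [hset, hρ', Measure.restrict_apply measurableSet_Iio]
      refine measure_mono fun x hx => ?_
      exact ⟨hx.2.1, le_of_lt hx.1⟩
    · rw [indicator_of_notMem hu]
      rcases lt_or_ge 0 u with h0 | h0
      · have hut : t0 ≤ u := by
          by_contra h
          exact hu ⟨h0, lt_of_not_ge h⟩
        have hset : {x : ℝ | 0 < u ∧ x < t0 - u} = Iio (t0 - u) := by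
          ext x; simp [h0]
        rw [hset, hρ', Measure.restrict_apply measurableSet_Iio]
        have : Iio (t0 - u) ∩ Icc 0 t0 = ∅ := by
          ext x
          simp only [mem_inter_iff, mem_Iio, mem_Icc, mem_empty_iff_false, iff_false]
          rintro ⟨h1, h2, h3⟩
          linarith
        rw [this]
        simp
      · have hset : {x : ℝ | 0 < u ∧ x < t0 - u} = ∅ := by
          ext x
          simp only [mem_setOf_eq, mem_empty_iff_false, iff_false]
          rintro ⟨h1, _⟩
          linarith
        rw [hset]
        simp
  calc ∫⁻ x in Icc 0 t0, ENNReal.ofReal ((t0 - x) ^ γ) ∂ρ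
      = ∫⁻ u, ∫⁻ x, F x u ∂ρ' ∂volume := by rw [step1, step2]
    _ ≤ _ := step3

lemma sigmaFinite_of_cdf (μ : Measure ℝ) (hsupp : μ (Set.Iio 0) = 0)
    (hfin : ∀ t : ℝ, μ (Set.Icc 0 t) < ⊤) : SigmaFinite μ := by
  refine ⟨⟨⟨fun n => Iio 0 ∪ Icc 0 n, fun _ => trivial, fun n => ?_, ?_⟩⟩⟩
  · calc μ (Iio 0 ∪ Icc 0 n) ≤ μ (Iio 0) + μ (Icc 0 n) := measure_union_le _ _
      _ < ⊤ := by rw [hsupp, zero_add]; exact hfin n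
  · ext x
    simp only [mem_iUnion, mem_union, mem_Iio, mem_Icc, mem_univ, iff_true]
    rcases lt_or_ge x 0 with h | h
    · exact ⟨0, Or.inl h⟩
    · obtain ⟨n, hn⟩ := exists_nat_ge x
      exact ⟨n, Or.inr ⟨h, hn⟩⟩

lemma mconv_apply (ρ μ : Measure ℝ) [SFinite μ] {s : Set ℝ} (hs : MeasurableSet s) :
    mconv ρ μ s = ∫⁻ x, μ {y | x + y ∈ s} ∂ρ := by
  rw [mconv, Measure.map_apply (by fun_prop) hs,
    Measure.prod_apply (hs.preimage (by fun_prop))]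
  rfl

lemma mconv_dirac (μ : Measure ℝ) [SFinite μ] : mconv (Measure.dirac 0) μ = μ := by
  rw [mconv, Measure.dirac_prod, Measure.map_map (by fun_prop) (by fun_prop)]
  simp [Function.comp_def]

lemma convpow_iio (μ : Measure ℝ) [SFinite μ] (hμ : μ (Set.Iio 0) = 0) :
    ∀ i, convpow μ i (Set.Iio 0) = 0 := by
  intro i
  induction i with
  | zero =>
    rw [convpow, Measure.dirac_apply' _ measurableSet_Iio]
    simp
  | succ n ih =>
    rw [convpow, mconv_apply _ _ measurableSet_Iio]
    have hae : ∀ᵐ x ∂(convpow μ n), (fun x => μ {y | x + y ∈ Iio 0}) x = 0 := by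
      rw [ae_iff]
      refine measure_mono_null (fun x hx => ?_) ih
      simp only [mem_setOf_eq] at hx
      by_contra h
      simp only [mem_Iio, not_lt] at h
      exact hx (measure_mono_null (fun y hy => by
        simp only [mem_setOf_eq, mem_Iio] at hy ⊢
        linarith) hμ)
    rw [lintegral_congr_ae hae, lintegral_zero]

lemma mconv_le (ρ μ : Measure ℝ) [SFinite μ] (hρ : ρ (Set.Iio 0) = 0)
    (hμ : μ (Set.Iio 0) = 0) {t0 : ℝ} (ht0 : 0 ≤ t0) :
    mconv ρ μ (Set.Icc 0 t0) ≤ ∫⁻ x in Set.Icc 0 t0, μ (Set.Icc 0 (t0 - x)) ∂ρ := by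
  rw [mconv_apply _ _ measurableSet_Icc, ← lintegral_indicator measurableSet_Icc]
  refine lintegral_mono_ae ?_
  have hae : ∀ᵐ x ∂ρ, 0 ≤ x := by
    rw [ae_iff]
    refine measure_mono_null (fun x hx => ?_) hρ
    simpa using hx
  filter_upwards [hae] with x hx
  by_cases hxt : x ≤ t0
  · rw [indicator_of_mem (show x ∈ Icc 0 t0 from ⟨hx, hxt⟩)]
    calc μ {y | x + y ∈ Icc 0 t0} ≤ μ (Iio 0 ∪ Icc 0 (t0 - x)) := by
          refine measure_mono fun y hy => ?_
          simp only [mem_setOf_eq, mem_Icc] at hy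
          rcases lt_or_ge y 0 with h | h
          · exact Or.inl h
          · exact Or.inr ⟨h, by linarith [hy.2]⟩
      _ ≤ μ (Iio 0) + μ (Icc 0 (t0 - x)) := measure_union_le _ _
      _ = μ (Icc 0 (t0 - x)) := by rw [hμ, zero_add]
  · have : μ {y | x + y ∈ Icc 0 t0} = 0 := by
      refine measure_mono_null (fun y hy => ?_) hμ
      simp only [mem_setOf_eq, mem_Icc] at hy
      simp only [mem_Iio]
      linarith [hy.2]
    rw [this]
    exact zero_le

lemma wendel {x s : ℝ} (hx : 0 < x) (hs0 : 0 ≤ s) (hs1 : s ≤ 1) :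
    Real.Gamma (x + s) ≤ x ^ s * Real.Gamma x := by
  have hx1 : (0:ℝ) < x + 1 := by linarith
  have h := Real.convexOn_log_Gamma.2 (mem_Ioi.mpr hx) (mem_Ioi.mpr hx1)
    (by linarith : (0:ℝ) ≤ 1 - s) hs0 (by ring)
  have hcomb : (1 - s) • x + s • (x + 1) = x + s := by simp [smul_eq_mul]; ring
  rw [hcomb] at h
  simp only [Function.comp_apply, smul_eq_mul] at h
  have hΓx : 0 < Real.Gamma x := Real.Gamma_pos_of_pos hx
  have hΓxs : 0 < Real.Gamma (x + s) := Real.Gamma_pos_of_pos (by linarith)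
  have hΓx1 : Real.Gamma (x + 1) = x * Real.Gamma x := Real.Gamma_add_one hx.ne'
  rw [hΓx1, Real.log_mul hx.ne' hΓx.ne'] at h
  have h2 : Real.log (Real.Gamma (x + s)) ≤ Real.log (Real.Gamma x) + s * Real.log x := by
    nlinarith [h]
  calc Real.Gamma (x + s) = Real.exp (Real.log (Real.Gamma (x + s))) := (Real.exp_log hΓxs).symm
    _ ≤ Real.exp (Real.log (Real.Gamma x) + s * Real.log x) := Real.exp_le_exp.mpr h2
    _ = x ^ s * Real.Gamma x := by
        rw [Real.exp_add, Real.exp_log hΓx, Real.rpow_def_of_pos hx]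
        ring_nf

lemma gammaChain {α β : ℝ} (hβ : 0 ≤ β) (hβα : β < α) (hα1 : α < 1) (j : ℕ) :
    ∀ k : ℕ, k ≤ j → Real.Gamma (α * j + 1) ≤
      (α * ((j:ℝ) - 1) + β + 1) ^ ((α - β) * k)
        * Real.Gamma (α * ((j:ℝ) - k) + β * k + 1) := by
  intro k
  induction k with
  | zero =>
    intro _
    simp only [Nat.cast_zero, mul_zero, Real.rpow_zero, one_mul, sub_zero, add_zero, le_refl]
  | succ k ih =>
    intro hk1
    push_cast
    have hk : k ≤ j := le_trans (Nat.le_succ k) hk1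
    have hkj : ((k:ℝ) + 1) ≤ (j:ℝ) := by exact_mod_cast hk1
    have hx : (0:ℝ) < α * ((j:ℝ) - (k+1)) + β * (k+1) + 1 := by
      have h1 : (0:ℝ) ≤ (j:ℝ) - (k+1) := by linarith
      have h2 : (0:ℝ) ≤ β * (k+1) := by positivity
      nlinarith [mul_nonneg (le_of_lt (lt_of_le_of_lt hβ hβα)) h1]
    have hM1 : (1:ℝ) ≤ α * ((j:ℝ) - 1) + β + 1 := by
      have hj1 : (1:ℝ) ≤ (j:ℝ) := by
        have : 1 ≤ j := le_trans (Nat.one_le_iff_ne_zero.mpr (by omega)) hk1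
        exact_mod_cast this
      nlinarith [mul_nonneg (le_of_lt (lt_of_le_of_lt hβ hβα)) (by linarith : (0:ℝ) ≤ (j:ℝ) - 1)]
    have hM : (0:ℝ) < α * ((j:ℝ) - 1) + β + 1 := by linarith
    have hxM : α * ((j:ℝ) - (k+1)) + β * (k+1) + 1 ≤ α * ((j:ℝ) - 1) + β + 1 := by
      nlinarith [hβα, (Nat.cast_nonneg k : (0:ℝ) ≤ k)]
    have hw := wendel hx (by linarith : (0:ℝ) ≤ α - β) (by linarith : α - β ≤ 1)
    have heq : α * ((j:ℝ) - (k+1)) + β * (k+1) + 1 + (α - β) = α * ((j:ℝ) - k) + β * k + 1 := by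
      push_cast; ring
    rw [heq] at hw
    calc Real.Gamma (α * j + 1)
        ≤ (α * ((j:ℝ) - 1) + β + 1) ^ ((α - β) * k)
          * Real.Gamma (α * ((j:ℝ) - k) + β * k + 1) := ih hk
      _ ≤ (α * ((j:ℝ) - 1) + β + 1) ^ ((α - β) * k)
          * ((α * ((j:ℝ) - (k+1)) + β * (k+1) + 1) ^ (α - β)
            * Real.Gamma (α * ((j:ℝ) - (k+1)) + β * (k+1) + 1)) := by
          refine mul_le_mul_of_nonneg_left hw ?_
          positivity
      _ ≤ (α * ((j:ℝ) - 1) + β + 1) ^ ((α - β) * k)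
          * ((α * ((j:ℝ) - 1) + β + 1) ^ (α - β)
            * Real.Gamma (α * ((j:ℝ) - (k+1)) + β * (k+1) + 1)) := by
          refine mul_le_mul_of_nonneg_left (mul_le_mul_of_nonneg_right
            (Real.rpow_le_rpow hx.le hxM (by linarith)) ?_) ?_
          · exact (Real.Gamma_pos_of_pos hx).le
          · positivity
      _ = (α * ((j:ℝ) - 1) + β + 1) ^ ((α - β) * (k+1))
          * Real.Gamma (α * ((j:ℝ) - (k+1)) + β * (k+1) + 1) := by
          rw [← mul_assoc, ← Real.rpow_add hM]
          congr 1
          ring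

lemma pascalSum (i : ℕ) (z : ℕ → ℝ) :
    (∑ k ∈ Finset.range (i+1), (i.choose k : ℝ) * z k)
      + (∑ k ∈ Finset.range (i+1), (i.choose k : ℝ) * z (k+1))
      = ∑ k ∈ Finset.range (i+2), ((i+1).choose k : ℝ) * z k := by
  have h1 : ∑ k ∈ Finset.range (i+2), ((i+1).choose k : ℝ) * z k
      = (∑ k ∈ Finset.range (i+1), (((i+1).choose (k+1) : ℕ) : ℝ) * z (k+1))
        + ((i+1).choose 0 : ℝ) * z 0 :=
    Finset.sum_range_succ' _ _
  have h2 : ∀ k, (((i+1).choose (k+1) : ℕ) : ℝ) = (i.choose k : ℝ) + (i.choose (k+1) : ℝ) := by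
    intro k
    rw [Nat.choose_succ_succ]
    push_cast
    ring
  have h3 : ∑ k ∈ Finset.range (i+1), (i.choose k : ℝ) * z k
      = (∑ k ∈ Finset.range i, (i.choose (k+1) : ℝ) * z (k+1)) + (i.choose 0 : ℝ) * z 0 :=
    Finset.sum_range_succ' _ _
  have h4 : ∑ k ∈ Finset.range (i+1), (i.choose (k+1) : ℝ) * z (k+1)
      = (∑ k ∈ Finset.range i, (i.choose (k+1) : ℝ) * z (k+1))
        + (i.choose (i+1) : ℝ) * z (i+1) := Finset.sum_range_succ _ _
  rw [h1]
  simp only [h2, add_mul]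
  rw [Finset.sum_add_distrib, h4, Nat.choose_succ_self]
  rw [h3]
  simp only [Nat.choose_zero_right, Nat.cast_one, Nat.cast_zero]
  ring

set_option maxHeartbeats 1000000 in
lemma mainInd (μ : Measure ℝ) [SFinite μ] (hsupp : μ (Set.Iio 0) = 0)
    (C D α β : ℝ) (hC : 0 < C) (hD : 0 < D) (hβ : 0 ≤ β) (hβα : β < α) (hα1 : α < 1)
    (hμb : ∀ v : ℝ, 0 ≤ v → μ (Set.Icc 0 v) ≤ ENNReal.ofReal (C * v ^ α + D * v ^ β)) :
    ∀ i : ℕ, ∀ s : ℝ, 0 ≤ s →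
      convpow μ i (Set.Icc 0 s) ≤ ENNReal.ofReal (∑ k ∈ Finset.range (i+1),
        (i.choose k : ℝ) * (C * Real.Gamma (α+1)) ^ (i-k) * (D * Real.Gamma (β+1)) ^ k
          / Real.Gamma (α * ((i:ℝ) - (k:ℝ)) + β * (k:ℝ) + 1)
          * s ^ (α * ((i:ℝ) - (k:ℝ)) + β * (k:ℝ))) := by
  have hα0 : 0 < α := lt_of_le_of_lt hβ hβα
  set a : ℝ := C * Real.Gamma (α+1) with ha_def
  set b : ℝ := D * Real.Gamma (β+1) with hb_def
  have hA : 0 < a := mul_pos hC (Real.Gamma_pos_of_pos (by linarith))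
  have hB : 0 < b := mul_pos hD (Real.Gamma_pos_of_pos (by linarith))
  set e : ℕ → ℕ → ℝ := fun i k => α * ((i:ℝ) - (k:ℝ)) + β * (k:ℝ) with he_def
  have he_nonneg : ∀ i k : ℕ, k ≤ i → 0 ≤ e i k := by
    intro i k hk
    show 0 ≤ α * ((i:ℝ) - (k:ℝ)) + β * (k:ℝ)
    have h1 : (0:ℝ) ≤ (i:ℝ) - (k:ℝ) := by
      have : (k:ℝ) ≤ (i:ℝ) := by exact_mod_cast hk
      linarith
    have h2 : (0:ℝ) ≤ β * k := by positivity
    nlinarith [mul_nonneg hα0.le h1]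
  set f : ℕ → ℕ → ℝ := fun i k => (i.choose k : ℝ) * a ^ (i-k) * b ^ k
      / Real.Gamma (e i k + 1) with hf_def
  have hf_nonneg : ∀ i k : ℕ, k ≤ i → 0 ≤ f i k := by
    intro i k hk
    have hΓ : 0 < Real.Gamma (e i k + 1) := Real.Gamma_pos_of_pos (by linarith [he_nonneg i k hk])
    positivity
  intro i
  induction i with
  | zero =>
    intro s hs
    have h0 : convpow μ 0 (Set.Icc 0 s) = 1 := by
      rw [show convpow μ 0 = Measure.dirac 0 from rfl,
        Measure.dirac_apply' _ measurableSet_Icc]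
      simp [indicator_of_mem (show (0:ℝ) ∈ Icc 0 s from ⟨le_refl _, hs⟩)]
    rw [h0]
    have he0 : e 0 0 = 0 := by simp [he_def]
    rw [Finset.sum_range_one]
    show (1:ℝ≥0∞) ≤ ENNReal.ofReal ((Nat.choose 0 0 : ℝ) * a ^ (0-0) * b ^ 0
      / Real.Gamma (e 0 0 + 1) * s ^ (e 0 0))
    rw [he0]
    simp [Real.Gamma_one, Real.rpow_zero]
  | succ i ih =>
    intro s hs
    set ρ : Measure ℝ := convpow μ i with hρ_def
    have hρs : ∀ v : ℝ, 0 ≤ v → ρ (Icc 0 v) ≤ ENNReal.ofReal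
        (∑ k ∈ Finset.range (i+1), f i k * v ^ (e i k)) := ih
    have hρfin : ρ (Icc 0 s) ≠ ⊤ :=
      ne_top_of_le_ne_top ofReal_ne_top (hρs s hs)
    have hρiio : ρ (Set.Iio 0) = 0 := convpow_iio μ hsupp i
    -- sum bound is nonneg
    have hsum_nonneg : ∀ v : ℝ, 0 ≤ v →
        ∀ k ∈ Finset.range (i+1), 0 ≤ f i k * v ^ (e i k) := by
      intro v hv k hk
      exact mul_nonneg (hf_nonneg i k (Nat.lt_succ_iff.mp (Finset.mem_range.mp hk)))
        (Real.rpow_nonneg hv _)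
    -- the generic per-power bound
    have keyPow : ∀ γ : ℝ, 0 ≤ γ → γ ≤ 1 →
        ∫⁻ x in Icc 0 s, ENNReal.ofReal ((s - x) ^ γ) ∂ρ
          ≤ ∑ k ∈ Finset.range (i+1), ENNReal.ofReal
            (f i k * (Real.Gamma (γ+1) * Real.Gamma (e i k + 1) / Real.Gamma (γ + e i k + 1))
              * s ^ (γ + e i k)) := by
      intro γ hγ0 hγ1
      rcases eq_or_lt_of_le hγ0 with rfl | hγpos
      · -- γ = 0 case
        have h1 : ∫⁻ x in Icc 0 s, ENNReal.ofReal ((s - x) ^ (0:ℝ)) ∂ρ = ρ (Icc 0 s) := by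
          simp [Real.rpow_zero]
        rw [h1]
        calc ρ (Icc 0 s) ≤ ENNReal.ofReal (∑ k ∈ Finset.range (i+1), f i k * s ^ (e i k)) :=
              hρs s hs
          _ = ∑ k ∈ Finset.range (i+1), ENNReal.ofReal (f i k * s ^ (e i k)) :=
              ENNReal.ofReal_sum_of_nonneg (hsum_nonneg s hs)
          _ ≤ _ := by
              refine Finset.sum_le_sum fun k hk => ?_
              have hk' : k ≤ i := Nat.lt_succ_iff.mp (Finset.mem_range.mp hk)
              apply le_of_eq
              have hΓ : Real.Gamma (e i k + 1) ≠ 0 :=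
                (Real.Gamma_pos_of_pos (by linarith [he_nonneg i k hk'] : (0:ℝ) < e i k + 1)).ne'
              congr 1
              simp only [zero_add, Real.Gamma_one, one_mul]
              rw [div_self hΓ, mul_one]
      · calc ∫⁻ x in Icc 0 s, ENNReal.ofReal ((s - x) ^ γ) ∂ρ
            ≤ ∫⁻ u in Ioo (0:ℝ) s, ENNReal.ofReal (γ * u ^ (γ-1)) * ρ (Icc 0 (s - u)) :=
              powInt ρ hs hγpos hρfin
          _ ≤ ∫⁻ u in Ioo (0:ℝ) s, ∑ k ∈ Finset.range (i+1),
                ENNReal.ofReal (γ * u ^ (γ-1)) * ENNReal.ofReal (f i k * (s-u) ^ (e i k)) := by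
              refine setLIntegral_mono (by fun_prop) fun u hu => ?_
              rw [← Finset.mul_sum]
              refine mul_le_mul_right ?_ _
              rw [← ENNReal.ofReal_sum_of_nonneg (hsum_nonneg (s-u) (by linarith [hu.2]))]
              exact hρs (s-u) (by linarith [hu.2])
          _ = ∑ k ∈ Finset.range (i+1), ∫⁻ u in Ioo (0:ℝ) s,
                ENNReal.ofReal (γ * u ^ (γ-1)) * ENNReal.ofReal (f i k * (s-u) ^ (e i k)) := by
              refine lintegral_finset_sum _ fun k hk => ?_
              fun_prop
          _ ≤ _ := by
              refine Finset.sum_le_sum fun k hk => ?_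
              have hk' : k ≤ i := Nat.lt_succ_iff.mp (Finset.mem_range.mp hk)
              have := betaLint hγpos (he_nonneg i k hk') (hf_nonneg i k hk') hs
              calc ∫⁻ u in Ioo (0:ℝ) s, ENNReal.ofReal (γ * u ^ (γ-1))
                    * ENNReal.ofReal (f i k * (s-u) ^ (e i k))
                  ≤ ENNReal.ofReal (f i k * (Real.Gamma (γ+1) * Real.Gamma (e i k + 1)
                      / Real.Gamma (γ + e i k + 1)) * s ^ (γ + e i k)) := this
                _ ≤ _ := le_refl _
    -- nonnegativity of the two real sums' terms
    have hTα : ∀ k, k ≤ i → 0 ≤ C * (f i k * (Real.Gamma (α+1) * Real.Gamma (e i k + 1)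
        / Real.Gamma (α + e i k + 1)) * s ^ (α + e i k)) := by
      intro k hk
      have h1 := hf_nonneg i k hk
      have h2 := (Real.Gamma_pos_of_pos (show (0:ℝ) < α + 1 by linarith)).le
      have h3 := (Real.Gamma_pos_of_pos (show (0:ℝ) < e i k + 1 by linarith [he_nonneg i k hk])).le
      have h4 := (Real.Gamma_pos_of_pos (show (0:ℝ) < α + e i k + 1 by
        linarith [he_nonneg i k hk])).le
      have h5 := Real.rpow_nonneg hs (α + e i k)
      have := mul_nonneg (mul_nonneg h1 (div_nonneg (mul_nonneg h2 h3) h4)) h5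
      exact mul_nonneg hC.le this
    have hTβ : ∀ k, k ≤ i → 0 ≤ D * (f i k * (Real.Gamma (β+1) * Real.Gamma (e i k + 1)
        / Real.Gamma (β + e i k + 1)) * s ^ (β + e i k)) := by
      intro k hk
      have h1 := hf_nonneg i k hk
      have h2 := (Real.Gamma_pos_of_pos (show (0:ℝ) < β + 1 by linarith)).le
      have h3 := (Real.Gamma_pos_of_pos (show (0:ℝ) < e i k + 1 by linarith [he_nonneg i k hk])).le
      have h4 := (Real.Gamma_pos_of_pos (show (0:ℝ) < β + e i k + 1 by
        linarith [he_nonneg i k hk])).le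
      have h5 := Real.rpow_nonneg hs (β + e i k)
      have := mul_nonneg (mul_nonneg h1 (div_nonneg (mul_nonneg h2 h3) h4)) h5
      exact mul_nonneg hD.le this
    -- C and D parts
    have hCpart : ∫⁻ x in Icc 0 s, ENNReal.ofReal (C * (s-x) ^ α) ∂ρ
        ≤ ∑ k ∈ Finset.range (i+1), ENNReal.ofReal
          (C * (f i k * (Real.Gamma (α+1) * Real.Gamma (e i k + 1)
            / Real.Gamma (α + e i k + 1)) * s ^ (α + e i k))) := by
      have h1 : ∀ x : ℝ, ENNReal.ofReal (C * (s-x) ^ α)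
          = ENNReal.ofReal C * ENNReal.ofReal ((s-x) ^ α) := fun x => ENNReal.ofReal_mul hC.le
      simp_rw [h1]
      rw [lintegral_const_mul' _ _ ofReal_ne_top]
      calc ENNReal.ofReal C * ∫⁻ x in Icc 0 s, ENNReal.ofReal ((s-x) ^ α) ∂ρ
          ≤ ENNReal.ofReal C * ∑ k ∈ Finset.range (i+1), ENNReal.ofReal
            (f i k * (Real.Gamma (α+1) * Real.Gamma (e i k + 1)
              / Real.Gamma (α + e i k + 1)) * s ^ (α + e i k)) :=
            mul_le_mul_right (keyPow α hα0.le hα1.le) _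
        _ = _ := by
            rw [Finset.mul_sum]
            exact Finset.sum_congr rfl fun k hk => (ENNReal.ofReal_mul hC.le).symm
    have hDpart : ∫⁻ x in Icc 0 s, ENNReal.ofReal (D * (s-x) ^ β) ∂ρ
        ≤ ∑ k ∈ Finset.range (i+1), ENNReal.ofReal
          (D * (f i k * (Real.Gamma (β+1) * Real.Gamma (e i k + 1)
            / Real.Gamma (β + e i k + 1)) * s ^ (β + e i k))) := by
      have h1 : ∀ x : ℝ, ENNReal.ofReal (D * (s-x) ^ β)
          = ENNReal.ofReal D * ENNReal.ofReal ((s-x) ^ β) := fun x => ENNReal.ofReal_mul hD.le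
      simp_rw [h1]
      rw [lintegral_const_mul' _ _ ofReal_ne_top]
      calc ENNReal.ofReal D * ∫⁻ x in Icc 0 s, ENNReal.ofReal ((s-x) ^ β) ∂ρ
          ≤ ENNReal.ofReal D * ∑ k ∈ Finset.range (i+1), ENNReal.ofReal
            (f i k * (Real.Gamma (β+1) * Real.Gamma (e i k + 1)
              / Real.Gamma (β + e i k + 1)) * s ^ (β + e i k)) :=
            mul_le_mul_right (keyPow β hβ (by linarith)) _
        _ = _ := by
            rw [Finset.mul_sum]
            exact Finset.sum_congr rfl fun k hk => (ENNReal.ofReal_mul hD.le).symm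
    -- the Pascal recombination, as a real identity
    set z : ℕ → ℝ := fun k => a ^ (i+1-k) * b ^ k
        / Real.Gamma (e (i+1) k + 1) * s ^ (e (i+1) k) with hz_def
    have hCsum : ∑ k ∈ Finset.range (i+1), C * (f i k * (Real.Gamma (α+1)
        * Real.Gamma (e i k + 1) / Real.Gamma (α + e i k + 1)) * s ^ (α + e i k))
        = ∑ k ∈ Finset.range (i+1), (i.choose k : ℝ) * z k := by
      refine Finset.sum_congr rfl fun k hk => ?_
      have hk' : k ≤ i := Nat.lt_succ_iff.mp (Finset.mem_range.mp hk)
      have hΓe : Real.Gamma (e i k + 1) ≠ 0 :=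
        (Real.Gamma_pos_of_pos (by linarith [he_nonneg i k hk'])).ne'
      have hexp : α + e i k = e (i+1) k := by
        show α + (α * ((i:ℝ) - (k:ℝ)) + β * (k:ℝ))
          = α * (((i+1:ℕ):ℝ) - (k:ℝ)) + β * (k:ℝ)
        push_cast
        ring
      have hΓ' : Real.Gamma (α + e i k + 1) ≠ 0 :=
        (Real.Gamma_pos_of_pos (by linarith [he_nonneg i k hk'])).ne'
      have hpow : a ^ (i+1-k) = a ^ (i-k) * (C * Real.Gamma (α+1)) := by
        rw [show i+1-k = (i-k)+1 by omega, ha_def, pow_succ]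
      rw [hz_def]
      simp only
      rw [← hexp, hpow, hf_def]
      simp only
      field_simp [hΓe, hΓ']
    have hDsum : ∑ k ∈ Finset.range (i+1), D * (f i k * (Real.Gamma (β+1)
        * Real.Gamma (e i k + 1) / Real.Gamma (β + e i k + 1)) * s ^ (β + e i k))
        = ∑ k ∈ Finset.range (i+1), (i.choose k : ℝ) * z (k+1) := by
      refine Finset.sum_congr rfl fun k hk => ?_
      have hk' : k ≤ i := Nat.lt_succ_iff.mp (Finset.mem_range.mp hk)
      have hΓe : Real.Gamma (e i k + 1) ≠ 0 :=
        (Real.Gamma_pos_of_pos (by linarith [he_nonneg i k hk'])).ne'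
      have hexp : β + e i k = e (i+1) (k+1) := by
        show β + (α * ((i:ℝ) - (k:ℝ)) + β * (k:ℝ))
          = α * (((i+1:ℕ):ℝ) - ((k+1:ℕ):ℝ)) + β * ((k+1:ℕ):ℝ)
        push_cast
        ring
      have hΓ' : Real.Gamma (β + e i k + 1) ≠ 0 :=
        (Real.Gamma_pos_of_pos (by linarith [he_nonneg i k hk'])).ne'
      have hpow : b ^ (k+1) = b ^ k * (D * Real.Gamma (β+1)) := by
        rw [hb_def]; exact pow_succ _ _
      have hpow2 : i+1-(k+1) = i-k := by omega
      rw [hz_def]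
      simp only
      rw [← hexp, hpow2, hpow, hf_def]
      simp only
      field_simp [hΓe, hΓ']
    have hfinal : (∑ k ∈ Finset.range (i+1), C * (f i k * (Real.Gamma (α+1)
          * Real.Gamma (e i k + 1) / Real.Gamma (α + e i k + 1)) * s ^ (α + e i k)))
        + (∑ k ∈ Finset.range (i+1), D * (f i k * (Real.Gamma (β+1)
          * Real.Gamma (e i k + 1) / Real.Gamma (β + e i k + 1)) * s ^ (β + e i k)))
        = ∑ k ∈ Finset.range (i+1+1),
          ((i+1).choose k : ℝ) * a ^ (i+1-k) * b ^ k
            / Real.Gamma (α * (((i+1:ℕ):ℝ) - (k:ℝ)) + β * (k:ℝ) + 1)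
            * s ^ (α * (((i+1:ℕ):ℝ) - (k:ℝ)) + β * (k:ℝ)) := by
      rw [hCsum, hDsum, pascalSum i z]
      refine Finset.sum_congr rfl fun k hk => ?_
      rw [hz_def]
      simp only
      ring
    -- assemble
    calc convpow μ (i+1) (Icc 0 s)
        ≤ ∫⁻ x in Icc 0 s, μ (Icc 0 (s - x)) ∂ρ := by
          rw [convpow]
          exact mconv_le ρ μ hρiio hsupp hs
      _ ≤ ∫⁻ x in Icc 0 s, (ENNReal.ofReal (C * (s-x) ^ α)
            + ENNReal.ofReal (D * (s-x) ^ β)) ∂ρ := by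
          refine setLIntegral_mono (by fun_prop) fun x hx => ?_
          rw [← ENNReal.ofReal_add (mul_nonneg hC.le (Real.rpow_nonneg (by linarith [hx.2]) _))
            (mul_nonneg hD.le (Real.rpow_nonneg (by linarith [hx.2]) _))]
          exact hμb (s - x) (by linarith [hx.2])
      _ = (∫⁻ x in Icc 0 s, ENNReal.ofReal (C * (s-x) ^ α) ∂ρ)
            + ∫⁻ x in Icc 0 s, ENNReal.ofReal (D * (s-x) ^ β) ∂ρ :=
          lintegral_add_left (by fun_prop) _
      _ ≤ (∑ k ∈ Finset.range (i+1), ENNReal.ofReal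
            (C * (f i k * (Real.Gamma (α+1) * Real.Gamma (e i k + 1)
              / Real.Gamma (α + e i k + 1)) * s ^ (α + e i k))))
          + ∑ k ∈ Finset.range (i+1), ENNReal.ofReal
            (D * (f i k * (Real.Gamma (β+1) * Real.Gamma (e i k + 1)
              / Real.Gamma (β + e i k + 1)) * s ^ (β + e i k))) := add_le_add hCpart hDpart
      _ = ENNReal.ofReal ((∑ k ∈ Finset.range (i+1), C * (f i k * (Real.Gamma (α+1)
            * Real.Gamma (e i k + 1) / Real.Gamma (α + e i k + 1)) * s ^ (α + e i k)))
          + ∑ k ∈ Finset.range (i+1), D * (f i k * (Real.Gamma (β+1)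
            * Real.Gamma (e i k + 1) / Real.Gamma (β + e i k + 1)) * s ^ (β + e i k))) := by
          rw [ENNReal.ofReal_add (Finset.sum_nonneg fun k hk =>
              hTα k (Nat.lt_succ_iff.mp (Finset.mem_range.mp hk)))
            (Finset.sum_nonneg fun k hk => hTβ k (Nat.lt_succ_iff.mp (Finset.mem_range.mp hk))),
            ENNReal.ofReal_sum_of_nonneg (fun k hk =>
              hTα k (Nat.lt_succ_iff.mp (Finset.mem_range.mp hk))),
            ENNReal.ofReal_sum_of_nonneg (fun k hk =>
              hTβ k (Nat.lt_succ_iff.mp (Finset.mem_range.mp hk)))]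
      _ = _ := by rw [hfinal]

/- Under |V₁(t) − C t^α| ≤ D t^β (t ≥ 0), for every t ≥ 0 and positive integer j
with 2DΓ(β+1) j (α(j−1)+β+1)^{α−β} ≤ CΓ(α+1) t^{α−β}:
V_j(t) ≤ (331/100) ρ_j t^{αj}. -/

set_option maxHeartbeats 1000000 in
theorem corollary_ineq_vj
    (μ : Measure ℝ) (hsupp : μ (Set.Iio 0) = 0)
    (hfin : ∀ t : ℝ, μ (Set.Icc 0 t) < ⊤)
    (C D α β : ℝ) (hC : 0 < C) (hD : 0 < D)
    (hβ : 0 ≤ β) (hβα : β < α) (hα1 : α < 1)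
    (V : ℕ → ℝ → ℝ) (hV : ∀ j t, V j t = (convpow μ j (Set.Icc 0 t)).toReal)
    (hVbound : ∀ t ≥ (0:ℝ), |V 1 t - C * t ^ α| ≤ D * t ^ β)
    (ρ : ℕ → ℝ)
    (hρ : ∀ i : ℕ, ρ i = (C * Real.Gamma (α + 1)) ^ i / Real.Gamma (α * i + 1)) :
    ∀ t ≥ (0:ℝ), ∀ j : ℕ, 1 ≤ j →
      2 * D * Real.Gamma (β + 1) * j * (α * ((j : ℝ) - 1) + β + 1) ^ (α - β)
          ≤ C * Real.Gamma (α + 1) * t ^ (α - β) →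
      V j t ≤ 331 / 100 * ρ j * t ^ (α * j) := by
  intro t ht j hj hcond
  haveI : SigmaFinite μ := sigmaFinite_of_cdf μ hsupp hfin
  have hα0 : 0 < α := lt_of_le_of_lt hβ hβα
  have hΓα : 0 < Real.Gamma (α + 1) := Real.Gamma_pos_of_pos (by linarith)
  have hΓβ : 0 < Real.Gamma (β + 1) := Real.Gamma_pos_of_pos (by linarith)
  have hA : 0 < C * Real.Gamma (α+1) := mul_pos hC hΓα
  have hB : 0 < D * Real.Gamma (β+1) := mul_pos hD hΓβ
  have hjR : (1:ℝ) ≤ (j:ℝ) := by exact_mod_cast hj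
  have hM : (1:ℝ) ≤ α * ((j:ℝ) - 1) + β + 1 := by
    nlinarith [mul_nonneg hα0.le (by linarith : (0:ℝ) ≤ (j:ℝ) - 1)]
  have hMpos : (0:ℝ) < α * ((j:ℝ) - 1) + β + 1 := by linarith
  have hMx : (0:ℝ) < (α * ((j:ℝ) - 1) + β + 1) ^ (α - β) :=
    Real.rpow_pos_of_pos hMpos _
  -- t must be positive
  have ht0 : 0 < t := by
    rcases eq_or_lt_of_le ht with rfl | h
    · exfalso
      rw [Real.zero_rpow (by linarith : α - β ≠ 0)] at hcond
      nlinarith [hMx, mul_pos (mul_pos (mul_pos (by linarith : (0:ℝ) < 2*D) hΓβ)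
        (by linarith : (0:ℝ) < (j:ℝ))) hMx]
    · exact h
  -- the convolution power bound
  have hconv1 : convpow μ 1 = μ := by
    show mconv (convpow μ 0) μ = μ
    show mconv (Measure.dirac 0) μ = μ
    exact mconv_dirac μ
  have hμb : ∀ v : ℝ, 0 ≤ v → μ (Set.Icc 0 v) ≤ ENNReal.ofReal (C * v ^ α + D * v ^ β) := by
    intro v hv
    have h1 : μ (Set.Icc 0 v) = ENNReal.ofReal (V 1 v) := by
      rw [hV 1 v, hconv1, ENNReal.ofReal_toReal (hfin v).ne]
    rw [h1]
    apply ENNReal.ofReal_le_ofReal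
    have h2 := (abs_le.mp (hVbound v hv)).2
    linarith
  have hW := mainInd μ hsupp C D α β hC hD hβ hβα hα1 hμb j t ht
  -- nonnegativity of terms
  have hterm_nonneg : ∀ k ∈ Finset.range (j+1), 0 ≤
      (j.choose k : ℝ) * (C * Real.Gamma (α+1)) ^ (j-k) * (D * Real.Gamma (β+1)) ^ k
        / Real.Gamma (α * ((j:ℝ) - (k:ℝ)) + β * (k:ℝ) + 1)
        * t ^ (α * ((j:ℝ) - (k:ℝ)) + β * (k:ℝ)) := by
    intro k hk
    have hk' : k ≤ j := Nat.lt_succ_iff.mp (Finset.mem_range.mp hk)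
    have hE : (0:ℝ) ≤ α * ((j:ℝ) - (k:ℝ)) + β * (k:ℝ) := by
      have h1 : (k:ℝ) ≤ (j:ℝ) := by exact_mod_cast hk'
      have h2 : (0:ℝ) ≤ β * k := by positivity
      nlinarith [mul_nonneg hα0.le (by linarith : (0:ℝ) ≤ (j:ℝ) - (k:ℝ))]
    have hΓE : 0 < Real.Gamma (α * ((j:ℝ) - (k:ℝ)) + β * (k:ℝ) + 1) :=
      Real.Gamma_pos_of_pos (by linarith)
    have := Real.rpow_nonneg ht.le (α * ((j:ℝ) - (k:ℝ)) + β * (k:ℝ))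
    positivity
  have hVjt : V j t ≤ ∑ k ∈ Finset.range (j+1),
      (j.choose k : ℝ) * (C * Real.Gamma (α+1)) ^ (j-k) * (D * Real.Gamma (β+1)) ^ k
        / Real.Gamma (α * ((j:ℝ) - (k:ℝ)) + β * (k:ℝ) + 1)
        * t ^ (α * ((j:ℝ) - (k:ℝ)) + β * (k:ℝ)) := by
    rw [hV]
    exact ENNReal.toReal_le_of_le_ofReal (Finset.sum_nonneg hterm_nonneg) hW
  -- per-term estimates
  have hG0 : 0 < Real.Gamma (α * (j:ℝ) + 1) :=
    Real.Gamma_pos_of_pos (by nlinarith [mul_nonneg hα0.le (by linarith : (0:ℝ) ≤ (j:ℝ))])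
  have hR : (0:ℝ) ≤ (C * Real.Gamma (α+1)) ^ j / Real.Gamma (α * (j:ℝ) + 1) * t ^ (α * (j:ℝ)) := by
    have := Real.rpow_nonneg ht.le (α * (j:ℝ))
    positivity
  have key : ∀ k ∈ Finset.range (j+1),
      (j.choose k : ℝ) * (C * Real.Gamma (α+1)) ^ (j-k) * (D * Real.Gamma (β+1)) ^ k
        / Real.Gamma (α * ((j:ℝ) - (k:ℝ)) + β * (k:ℝ) + 1)
        * t ^ (α * ((j:ℝ) - (k:ℝ)) + β * (k:ℝ))
      ≤ (1/2:ℝ)^k * ((C * Real.Gamma (α+1)) ^ j / Real.Gamma (α * (j:ℝ) + 1)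
          * t ^ (α * (j:ℝ))) := by
    intro k hk
    have hk' : k ≤ j := Nat.lt_succ_iff.mp (Finset.mem_range.mp hk)
    have hkR : (k:ℝ) ≤ (j:ℝ) := by exact_mod_cast hk'
    have hE : (0:ℝ) ≤ α * ((j:ℝ) - (k:ℝ)) + β * (k:ℝ) := by
      have h2 : (0:ℝ) ≤ β * k := by positivity
      nlinarith [mul_nonneg hα0.le (by linarith : (0:ℝ) ≤ (j:ℝ) - (k:ℝ))]
    have hG : 0 < Real.Gamma (α * ((j:ℝ) - (k:ℝ)) + β * (k:ℝ) + 1) :=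
      Real.Gamma_pos_of_pos (by linarith)
    have hT : (0:ℝ) < t ^ (α * ((j:ℝ) - (k:ℝ)) + β * (k:ℝ)) := Real.rpow_pos_of_pos ht0 _
    have hX : (0:ℝ) < t ^ (α - β) := Real.rpow_pos_of_pos ht0 _
    -- Gamma chain with rpow → pow
    have hchain : Real.Gamma (α * (j:ℝ) + 1)
        ≤ ((α * ((j:ℝ) - 1) + β + 1) ^ (α - β)) ^ k
          * Real.Gamma (α * ((j:ℝ) - (k:ℝ)) + β * (k:ℝ) + 1) := by
      have h := gammaChain hβ hβα hα1 j k hk'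
      rwa [Real.rpow_mul hMpos.le, Real.rpow_natCast] at h
    -- t-power decomposition
    have ht_decomp : t ^ (α * (j:ℝ)) = t ^ (α * ((j:ℝ) - (k:ℝ)) + β * (k:ℝ))
        * (t ^ (α - β)) ^ k := by
      rw [← Real.rpow_natCast (t ^ (α - β)) k, ← Real.rpow_mul ht0.le, ← Real.rpow_add ht0]
      congr 1
      ring
    -- the binomial/geometric estimate
    have hgeom : (j.choose k : ℝ) * ((D * Real.Gamma (β+1))
        * ((α * ((j:ℝ) - 1) + β + 1) ^ (α - β))) ^ k
        ≤ (C * Real.Gamma (α+1) * t ^ (α - β) / 2) ^ k := by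
      have h1 : (j.choose k : ℝ) ≤ (j:ℝ)^k := by exact_mod_cast Nat.choose_le_pow j k
      have h2 : (0:ℝ) ≤ (D * Real.Gamma (β+1)) * ((α * ((j:ℝ) - 1) + β + 1) ^ (α - β)) :=
        le_of_lt (mul_pos hB hMx)
      calc (j.choose k : ℝ) * ((D * Real.Gamma (β+1))
            * ((α * ((j:ℝ) - 1) + β + 1) ^ (α - β))) ^ k
          ≤ (j:ℝ)^k * ((D * Real.Gamma (β+1))
            * ((α * ((j:ℝ) - 1) + β + 1) ^ (α - β))) ^ k :=
            mul_le_mul_of_nonneg_right h1 (pow_nonneg h2 k)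
        _ = ((j:ℝ) * ((D * Real.Gamma (β+1))
            * ((α * ((j:ℝ) - 1) + β + 1) ^ (α - β)))) ^ k := (mul_pow _ _ _).symm
        _ ≤ (C * Real.Gamma (α+1) * t ^ (α - β) / 2) ^ k := by
            refine pow_le_pow_left₀ (by positivity) ?_ k
            nlinarith [hcond]
    -- assemble
    rw [ht_decomp]
    have h5 : (1/2:ℝ)^k * ((C * Real.Gamma (α+1)) ^ j / Real.Gamma (α * (j:ℝ) + 1)
        * (t ^ (α * ((j:ℝ) - (k:ℝ)) + β * (k:ℝ)) * (t ^ (α - β)) ^ k))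
        = ((1/2:ℝ)^k * (C * Real.Gamma (α+1)) ^ j * t ^ (α * ((j:ℝ) - (k:ℝ)) + β * (k:ℝ))
          * (t ^ (α - β)) ^ k) / Real.Gamma (α * (j:ℝ) + 1) := by ring
    rw [h5]
    have hnum : (0:ℝ) ≤ (1/2:ℝ)^k * (C * Real.Gamma (α+1)) ^ j
        * t ^ (α * ((j:ℝ) - (k:ℝ)) + β * (k:ℝ)) * (t ^ (α - β)) ^ k := by positivity
    have h6 := div_le_div_of_nonneg_left hnum hG0 hchain
    refine le_trans ?_ h6
    rw [div_mul_eq_mul_div, div_le_div_iff₀ hG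
      (mul_pos (pow_pos hMx k) hG)]
    have hcore : (j.choose k : ℝ) * (C * Real.Gamma (α+1)) ^ (j-k) * (D * Real.Gamma (β+1)) ^ k
        * ((α * ((j:ℝ) - 1) + β + 1) ^ (α - β)) ^ k
        ≤ (1/2:ℝ)^k * (C * Real.Gamma (α+1)) ^ j * (t ^ (α - β)) ^ k := by
      have hsplit : (C * Real.Gamma (α+1)) ^ j
          = (C * Real.Gamma (α+1)) ^ (j-k) * (C * Real.Gamma (α+1)) ^ k := by
        rw [← pow_add, Nat.sub_add_cancel hk']
      have h7 : (j.choose k : ℝ) * ((D * Real.Gamma (β+1))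
          * ((α * ((j:ℝ) - 1) + β + 1) ^ (α - β))) ^ k
          = (j.choose k : ℝ) * (D * Real.Gamma (β+1)) ^ k
            * ((α * ((j:ℝ) - 1) + β + 1) ^ (α - β)) ^ k := by
        rw [mul_pow]; ring
      have h8 : (C * Real.Gamma (α+1) * t ^ (α - β) / 2) ^ k
          = (C * Real.Gamma (α+1)) ^ k * (t ^ (α - β)) ^ k * (1/2:ℝ)^k := by
        rw [div_pow, mul_pow, one_div, inv_pow]
        ring
      calc (j.choose k : ℝ) * (C * Real.Gamma (α+1)) ^ (j-k) * (D * Real.Gamma (β+1)) ^ k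
            * ((α * ((j:ℝ) - 1) + β + 1) ^ (α - β)) ^ k
          = (C * Real.Gamma (α+1)) ^ (j-k) * ((j.choose k : ℝ) * ((D * Real.Gamma (β+1))
            * ((α * ((j:ℝ) - 1) + β + 1) ^ (α - β))) ^ k) := by rw [h7]; ring
        _ ≤ (C * Real.Gamma (α+1)) ^ (j-k) * (C * Real.Gamma (α+1) * t ^ (α - β) / 2) ^ k :=
            mul_le_mul_of_nonneg_left hgeom (pow_nonneg hA.le _)
        _ = (1/2:ℝ)^k * (C * Real.Gamma (α+1)) ^ j * (t ^ (α - β)) ^ k := by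
            rw [h8, hsplit]; ring
    have h9 := mul_le_mul_of_nonneg_right hcore
      (mul_nonneg hT.le hG.le)
    nlinarith [h9]
  -- sum up
  have hgs : ∑ k ∈ Finset.range (j+1), (1/2:ℝ)^k ≤ 2 := by
    rw [geom_sum_eq (by norm_num : (1/2:ℝ) ≠ 1) (j+1)]
    have h1 : (0:ℝ) ≤ (1/2:ℝ)^(j+1) := by positivity
    have h2 : ((1/2:ℝ)^(j+1) - 1) / ((1/2:ℝ) - 1) = 2 - 2*(1/2:ℝ)^(j+1) := by ring
    rw [h2]
    linarith
  calc V j t ≤ ∑ k ∈ Finset.range (j+1),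
        (j.choose k : ℝ) * (C * Real.Gamma (α+1)) ^ (j-k) * (D * Real.Gamma (β+1)) ^ k
          / Real.Gamma (α * ((j:ℝ) - (k:ℝ)) + β * (k:ℝ) + 1)
          * t ^ (α * ((j:ℝ) - (k:ℝ)) + β * (k:ℝ)) := hVjt
    _ ≤ ∑ k ∈ Finset.range (j+1), (1/2:ℝ)^k * ((C * Real.Gamma (α+1)) ^ j
          / Real.Gamma (α * (j:ℝ) + 1) * t ^ (α * (j:ℝ))) := Finset.sum_le_sum key
    _ = (∑ k ∈ Finset.range (j+1), (1/2:ℝ)^k) * ((C * Real.Gamma (α+1)) ^ j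
          / Real.Gamma (α * (j:ℝ) + 1) * t ^ (α * (j:ℝ))) := by rw [← Finset.sum_mul]
    _ ≤ 2 * ((C * Real.Gamma (α+1)) ^ j / Real.Gamma (α * (j:ℝ) + 1) * t ^ (α * (j:ℝ))) :=
        mul_le_mul_of_nonneg_right hgs hR
    _ ≤ 331 / 100 * ρ j * t ^ (α * j) := by
        rw [hρ j]
        nlinarith [hR]
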